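/- Let F : {0,1}^N → {0,1}^N be the map sending an initial state s(0) of the simple counter of dimension N to the state s(N) obtained after N time steps (starting at time 0, so mode(0) = switch). Then F has a periodic orbit of length at least 2^N; in particular the 2^N states F^k(0,...,0) for k = 0, 1, ..., 2^N − 1 are pairwise distinct. -/

import Mathlib

/-- The two modes of the counter. -/
inductive Mode : Type
  | rotate : Mode
  | switch : Mode
deriving DecidableEq

/-- A trajectory `s` (with mode sequence `mode`) of the simple counter of
dimension `N`, started at time `0` (so that `mode 0 = switch`).
Coordinates are `0`-indexed: coordinate `i` corresponds to `s_{i+1}`. -/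
def SimpleCounterTraj {N : ℕ} (hN : 0 < N)
    (s : ℕ → Fin N → Bool) (mode : ℕ → Mode) : Prop :=
  (∀ (t : ℕ) (i : Fin N) (h : (i : ℕ) + 1 < N),
      s (t + 1) i = s t ⟨(i : ℕ) + 1, h⟩) ∧
  (∀ t : ℕ, s (t + 1) ⟨N - 1, Nat.sub_lt hN one_pos⟩ =
      (if mode t = Mode.switch then !(s t ⟨0, hN⟩) else s t ⟨0, hN⟩)) ∧
  (∀ t : ℕ, N ∣ t → mode t = Mode.switch) ∧
  (∀ t : ℕ, ¬ N ∣ (t + 1) →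
      mode (t + 1) = (if s t ⟨0, hN⟩ = true then mode t else Mode.rotate))

/-- extend a finite bit vector by `false`s. -/
def extB {N : ℕ} (x : Fin N → Bool) : ℕ → Bool :=
  fun n => if h : n < N then x ⟨n, h⟩ else false

/-- binary increment on bit streams (LSB first). -/
def INC (f : ℕ → Bool) : ℕ → Bool :=
  fun i => xor (f i) (decide (∀ k, k < i → f k = true))

/-- binary increment on finite bit vectors. -/
def incN {N : ℕ} (x : Fin N → Bool) : Fin N → Bool :=
  fun i => INC (extB x) i

/-- value of the first `n` bits. -/
def vala : ℕ → (ℕ → Bool) → ℕ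
  | 0, _ => 0
  | n+1, f => (cond (f 0) 1 0) + 2 * vala n (fun k => f (k+1))

lemma vala_lt (n : ℕ) (f : ℕ → Bool) : vala n f < 2 ^ n := by
  induction n generalizing f with
  | zero => simp [vala]
  | succ n ih =>
    have := ih (fun k => f (k+1))
    simp only [vala, pow_succ]
    cases f 0 <;> simp <;> omega

lemma vala_congr {n : ℕ} {f g : ℕ → Bool} (h : ∀ k < n, f k = g k) :
    vala n f = vala n g := by
  induction n generalizing f g with
  | zero => rfl
  | succ n ih =>
    simp only [vala, h 0 (Nat.succ_pos n)]
    congr 1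
    exact congrArg _ (ih fun k hk => h (k+1) (by omega))

lemma vala_inj {n : ℕ} {f g : ℕ → Bool} (h : vala n f = vala n g) :
    ∀ k < n, f k = g k := by
  induction n generalizing f g with
  | zero => omega
  | succ n ih =>
    simp only [vala] at h
    have h0 : f 0 = g 0 := by
      cases hf : f 0 <;> cases hg : g 0 <;> simp [hf, hg] at h ⊢ <;> omega
    rw [h0] at h
    have h2 : vala n (fun k => f (k+1)) = vala n (fun k => g (k+1)) := by omega
    intro k hk
    rcases Nat.eq_zero_or_pos k with rfl | hkpos
    · exact h0
    · obtain ⟨j, rfl⟩ : ∃ j, k = j + 1 := ⟨k - 1, by omega⟩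
      exact ih h2 j (by omega)

lemma vala_false (n : ℕ) : vala n (fun _ => false) = 0 := by
  induction n with
  | zero => rfl
  | succ n ih => simp [vala, ih]

lemma vala_INC (n : ℕ) (f : ℕ → Bool) :
    vala n (INC f) = (vala n f + 1) % 2 ^ n := by
  induction n generalizing f with
  | zero => simp [vala]
  | succ n ih =>
    have h0 : INC f 0 = !f 0 := by simp [INC]
    cases hf : f 0 with
    | false =>
      have hsh : (fun k => INC f (k+1)) = fun k => f (k+1) := by
        funext k
        have : ¬ (∀ j, j < k + 1 → f j = true) := fun h => by
          have := h 0 (Nat.succ_pos k); rw [hf] at this; exact Bool.false_ne_true this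
        simp only [INC, decide_eq_false this, Bool.xor_false]
      have hb : vala n (fun k => f (k+1)) < 2 ^ n := vala_lt _ _
      rw [show vala (n+1) (INC f) = (cond (INC f 0) 1 0) + 2 * vala n (fun k => INC f (k+1)) from rfl,
        hsh, h0, hf]
      rw [show vala (n+1) f = (cond (f 0) 1 0) + 2 * vala n (fun k => f (k+1)) from rfl, hf]
      simp only [Bool.not_false, cond_true, cond_false]
      rw [Nat.mod_eq_of_lt (by rw [pow_succ]; omega)]
      omega
    | true =>
      have hsh : (fun k => INC f (k+1)) = INC (fun k => f (k+1)) := by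
        funext k
        simp only [INC]
        congr 1
        rw [decide_eq_decide]
        constructor
        · intro h j hj; exact h (j+1) (by omega)
        · intro h j hj
          rcases Nat.eq_zero_or_pos j with rfl | hj0
          · exact hf
          · obtain ⟨m, rfl⟩ : ∃ m, j = m + 1 := ⟨j - 1, by omega⟩
            exact h m (by omega)
      rw [show vala (n+1) (INC f) = (cond (INC f 0) 1 0) + 2 * vala n (fun k => INC f (k+1)) from rfl,
        hsh, h0, hf, ih]
      rw [show vala (n+1) f = (cond (f 0) 1 0) + 2 * vala n (fun k => f (k+1)) from rfl, hf]
      simp only [Bool.not_true, cond_true, cond_false]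
      rw [show (2:ℕ) ^ (n+1) = 2 * 2 ^ n from by ring,
        show ((1 + 2 * vala n fun k => f (k + 1)) + 1) = 2 * ((vala n fun k => f (k+1)) + 1) from by ring,
        Nat.mul_mod_mul_left]
      omega

lemma extB_incN {N : ℕ} (x : Fin N → Bool) (k : ℕ) (hk : k < N) :
    extB (incN x) k = INC (extB x) k := by
  simp only [extB, dif_pos hk]; rfl


/-- If `F` maps each initial state `s(0)` of the simple counter of dimension `N`
to the state `s(N)` obtained after `N` steps, then `F` has a periodic orbit of
length at least `2^N`; in particular the states `F^[k] (0,…,0)` for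
`k = 0, …, 2^N - 1` are pairwise distinct. -/


theorem stmt2 (N : ℕ) (hN : 0 < N)
    (F : (Fin N → Bool) → (Fin N → Bool))
    (hF : ∀ (s : ℕ → Fin N → Bool) (mode : ℕ → Mode),
      SimpleCounterTraj hN s mode → F (s 0) = s N) :
    (∃ (x : Fin N → Bool) (p : ℕ),
      2 ^ N ≤ p ∧ F^[p] x = x ∧ ∀ k : ℕ, 0 < k → k < p → F^[k] x ≠ x) ∧
    (∀ k₁ k₂ : ℕ, k₁ < 2 ^ N → k₂ < 2 ^ N →
      F^[k₁] (fun _ => false) = F^[k₂] (fun _ => false) → k₁ = k₂) := by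
  have hstep : ∀ x : Fin N → Bool, F x = incN x := by
    intro x
    set B : ℕ → Fin N → Bool := fun q => incN^[q] x with hB
    set s : ℕ → Fin N → Bool :=
      fun t i => extB (B ((t + (i : ℕ)) / N)) ((t + (i : ℕ)) % N) with hs
    set mo : ℕ → Mode := fun t =>
      if (∀ k < t % N, extB (B (t / N)) k = true) then Mode.switch else Mode.rotate
      with hmo
    have key : ∀ t, extB (B ((t + N) / N)) ((t + N) % N)
        = xor (extB (B (t / N)) (t % N))
            (decide (∀ k, k < t % N → extB (B (t / N)) k = true)) := by
      intro t
      rw [Nat.add_div_right t hN, Nat.add_mod_right]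
      rw [show B (t / N + 1) = incN (B (t / N)) from Function.iterate_succ_apply' _ _ _]
      rw [extB_incN _ _ (Nat.mod_lt _ hN)]
      rfl
    have htraj : SimpleCounterTraj hN s mo := by
      refine ⟨?_, ?_, ?_, ?_⟩
      · intro t i h
        simp only [hs]
        rw [show t + 1 + (i : ℕ) = t + ((i : ℕ) + 1) from by omega]
      · intro t
        simp only [hs, hmo]
        rw [show t + 1 + (N - 1) = t + N from by omega, Nat.add_zero, key t]
        by_cases hP : ∀ k, k < t % N → extB (B (t / N)) k = true
        · rw [decide_eq_true hP, if_pos hP, Bool.xor_true]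
          simp
        · rw [decide_eq_false hP, if_neg hP, Bool.xor_false]
          simp
      · intro t ht
        obtain ⟨c, rfl⟩ := ht
        simp only [hmo, Nat.mul_mod_right]
        rw [if_pos]
        intro k hk; omega
      · intro t ht
        have hr : t % N < N := Nat.mod_lt _ hN
        have hlt : t % N + 1 < N := by
          by_contra h
          apply ht
          refine ⟨t / N + 1, ?_⟩
          have h2 := Nat.div_add_mod t N
          rw [Nat.mul_succ]
          omega
        have e : t + 1 = N * (t / N) + (t % N + 1) := by
          have := Nat.div_add_mod t N; omega
        have hm : (t + 1) % N = t % N + 1 := by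
          rw [e, Nat.mul_add_mod, Nat.mod_eq_of_lt hlt]
        have hd : (t + 1) / N = t / N := by
          rw [e, Nat.mul_add_div hN, Nat.div_eq_of_lt hlt, Nat.add_zero]
        simp only [hmo, hs, hm, hd,
          show ((⟨0, hN⟩ : Fin N) : ℕ) = 0 from rfl, Nat.add_zero]
        by_cases hz : extB (B (t / N)) (t % N) = true
        · rw [if_pos hz]
          by_cases hP : ∀ k < t % N, extB (B (t / N)) k = true
          · rw [if_pos, if_pos hP]
            intro k hk
            rcases Nat.lt_or_ge k (t % N) with h' | h'
            · exact hP k h'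
            · rw [show k = t % N from by omega]; exact hz
          · rw [if_neg, if_neg hP]
            exact fun h => hP fun k hk => h k (by omega)
        · rw [if_neg hz, if_neg]
          exact fun h => hz (h (t % N) (by omega))
    have h0 : s 0 = x := by
      funext i
      simp only [hs, Nat.zero_add, Nat.div_eq_of_lt i.isLt, Nat.mod_eq_of_lt i.isLt]
      simp only [hB, Function.iterate_zero, id_eq]
      simp [extB, i.isLt]
    have hNN : s N = incN x := by
      funext i
      simp only [hs, Nat.add_comm N (i : ℕ), Nat.add_div_right _ hN,
        Nat.add_mod_right, Nat.div_eq_of_lt i.isLt, Nat.mod_eq_of_lt i.isLt,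
        Nat.zero_add]
      simp only [hB, Function.iterate_one]
      simp [extB, i.isLt]
    calc F x = F (s 0) := by rw [h0]
      _ = s N := hF s mo htraj
      _ = incN x := hNN
  set v : (Fin N → Bool) → ℕ := fun y => vala N (extB y) with hv
  have hv1 : ∀ y, v (F y) = (v y + 1) % 2 ^ N := by
    intro y
    rw [hv]
    simp only [hstep y]
    rw [vala_congr (g := INC (extB y)) (fun k hk => extB_incN y k hk), vala_INC]
  have hvinj : ∀ y z, v y = v z → y = z := by
    intro y z h
    funext i
    have := vala_inj h i i.isLt
    simpa [extB, i.isLt] using this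
  have hvit : ∀ (k : ℕ) (y), v (F^[k] y) = (v y + k) % 2 ^ N := by
    intro k
    induction k with
    | zero =>
      intro y
      simp [Nat.mod_eq_of_lt (vala_lt N (extB y))]
      exact (Nat.mod_eq_of_lt (vala_lt N (extB y))).symm
    | succ k ih =>
      intro y
      rw [Function.iterate_succ_apply', hv1, ih, Nat.mod_add_mod, Nat.add_assoc]
  have hv0 : v (fun _ => false) = 0 := by
    have : extB (fun _ : Fin N => false) = fun _ => false := by
      funext n; simp [extB]
    rw [hv]; simp only [this, vala_false]
  constructor
  · refine ⟨fun _ => false, 2 ^ N, le_refl _, ?_, ?_⟩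
    · apply hvinj
      rw [hvit, hv0, Nat.zero_add, Nat.mod_self]
    · intro k hk0 hkp h
      have := congrArg v h
      rw [hvit, hv0, Nat.zero_add, Nat.mod_eq_of_lt hkp] at this
      omega
  · intro k₁ k₂ h1 h2 heq
    have := congrArg v heq
    rw [hvit, hvit, hv0, Nat.zero_add, Nat.zero_add,
      Nat.mod_eq_of_lt h1, Nat.mod_eq_of_lt h2] at this
    exact this
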